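/- arXiv:1607.03792 — 3 statements merged into one kernel-verified Lean document; each statement's English description precedes it below -/
import Mathlib

section
/- Let K be a d-dimensional smoothing kernel satisfying ∫₀^∞ K(t) t^{β+d-1} dt < ∞ for some β > 0. Then for any probability measure Q on ℝ^d, h > 0, and r ≥ 1, ∫_{‖x‖ > r} (h^{-d} ∫_{ℝ^d} K(‖x − x'‖/h) dQ(x')) dx ≤ C (Q({x : ‖x‖ > r/2}) + (h/r)^β), where C is a constant depending only on K, d, β. -/
open MeasureTheory Set
open scoped ENNReal

/-- Lintegral scaling on Euclidean space: `∫⁻ f = c^d * ∫⁻ f (c • ·)` for `c > 0`. -/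
lemma stmt5_aux_scaling {d : ℕ} {c : ℝ} (hc : 0 < c)
    (f : EuclideanSpace ℝ (Fin d) → ℝ≥0∞) (hf : Measurable f) :
    ∫⁻ x, f x = ENNReal.ofReal (c ^ d) * ∫⁻ x, f (c • x) := by
  have hmap := Measure.map_addHaar_smul (volume : Measure (EuclideanSpace ℝ (Fin d))) hc.ne'
  have h1 : ∫⁻ x, f (c • x) = ∫⁻ x, f x ∂(Measure.map (c • ·) volume) :=
    (lintegral_map hf (measurable_const_smul c)).symm
  rw [h1, hmap, lintegral_smul_measure, smul_eq_mul, finrank_euclideanSpace_fin,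
    abs_of_nonneg (inv_nonneg.2 (pow_nonneg hc.le d)), ← mul_assoc, ← ENNReal.ofReal_mul
      (pow_nonneg hc.le d), mul_inv_cancel₀ (pow_pos hc d).ne', ENNReal.ofReal_one, one_mul]

set_option maxHeartbeats 1600000

/-- Tail bound for the K-smoothing of a probability measure `Q`:
`∫_{‖x‖ > r} f_{Q,h}(x) dx ≤ C (Q(H_{r/2}) + (h/r)^β)`. -/
theorem stmt5 (d : ℕ) (hd : 1 ≤ d) (K : ℝ → ℝ) (β : ℝ) (hβ : 0 < β)
    (hK_nonneg : ∀ r, 0 ≤ K r)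
    (hK_bdd : ∃ M, ∀ r, K r ≤ M)
    (hK_anti : AntitoneOn K (Set.Ici (0 : ℝ)))
    (hK_int : Integrable (fun x : EuclideanSpace ℝ (Fin d) => K ‖x‖))
    (hK_one : ∫ x : EuclideanSpace ℝ (Fin d), K ‖x‖ = 1)
    (hK_moment : IntegrableOn (fun t : ℝ => K t * t ^ (β + d - 1)) (Set.Ioi 0)) :
    ∃ C > 0, ∀ (Q : Measure (EuclideanSpace ℝ (Fin d))), IsProbabilityMeasure Q →
      ∀ (h r : ℝ), 0 < h → 1 ≤ r →
        ∫ x in {x : EuclideanSpace ℝ (Fin d) | r < ‖x‖},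
            (h ^ d)⁻¹ * ∫ x', K (‖x - x'‖ / h) ∂Q
          ≤ C * ((Q {x : EuclideanSpace ℝ (Fin d) | r / 2 < ‖x‖}).toReal + (h / r) ^ β) := by
  classical
  obtain ⟨M, hM⟩ := hK_bdd
  have hM0 : 0 ≤ M := le_trans (hK_nonneg 0) (hM 0)
  set g : ℝ → ℝ := fun t => K (max t 0) with hg_def
  have hg_anti : Antitone g := fun a b hab =>
    hK_anti (mem_Ici.2 (le_max_right a 0)) (mem_Ici.2 (le_max_right b 0))
      (max_le_max hab le_rfl)
  have hg_meas : Measurable g := hg_anti.measurable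
  have hg_nonneg : ∀ t, 0 ≤ g t := fun t => hK_nonneg _
  have hg_eq : ∀ t, 0 ≤ t → g t = K t := fun t ht => by simp [hg_def, max_eq_left ht]
  have hg_le : ∀ t, g t ≤ M := fun t => hM _
  have hd1 : (1:ℝ) ≤ (d:ℝ) := by exact_mod_cast hd
  have hβd : (0:ℝ) ≤ β + d - 1 := by linarith
  have he_pos : (0:ℝ) < β + d := by linarith
  set e : ℝ := β + (d:ℝ) with he_def
  -- the 1-d moment constant
  set Mtot : ℝ := ∫ t in Ioi (0:ℝ), K t * t ^ (β + d - 1) with hMtot_def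
  have hMtot0 : 0 ≤ Mtot := setIntegral_nonneg measurableSet_Ioi
    (fun t ht => mul_nonneg (hK_nonneg t) (Real.rpow_nonneg (le_of_lt ht) _))
  set C₁ : ℝ := 2 ^ e * Mtot with hC₁_def
  have h2e : (0:ℝ) < 2 ^ e := Real.rpow_pos_of_pos (by norm_num) _
  have hC₁0 : 0 ≤ C₁ := mul_nonneg h2e.le hMtot0
  -- pointwise bound `K t ≤ C₁ * t ^ (-e)` for `t > 0`
  have hpt : ∀ t : ℝ, 0 < t → K t ≤ C₁ * t ^ (-e) := by
    intro t ht
    have ht2 : (0:ℝ) < t / 2 := by linarith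
    have hsub : Ioc (t/2) t ⊆ Ioi (0:ℝ) := fun s hs => lt_trans ht2 hs.1
    have hint1 : IntegrableOn (fun s : ℝ => K s * s ^ (β + d - 1)) (Ioc (t/2) t) :=
      hK_moment.mono_set hsub
    have hstep1 : ∫ s in Ioc (t/2) t, K s * s ^ (β + d - 1) ≤ Mtot := by
      refine setIntegral_mono_set hK_moment ?_ (HasSubset.Subset.eventuallyLE hsub)
      filter_upwards [ae_restrict_mem measurableSet_Ioi] with s hs
      exact mul_nonneg (hK_nonneg s) (Real.rpow_nonneg (le_of_lt hs) _)
    have hstep2 : K t * (t/2) ^ (β + d - 1) * (t/2)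
        ≤ ∫ s in Ioc (t/2) t, K s * s ^ (β + d - 1) := by
      have hconst : IntegrableOn (fun _ : ℝ => K t * (t/2) ^ (β + d - 1)) (Ioc (t/2) t) :=
        integrableOn_const measure_Ioc_lt_top.ne
      have hmono : ∀ s ∈ Ioc (t/2) t,
          (fun _ : ℝ => K t * (t/2) ^ (β + d - 1)) s ≤ K s * s ^ (β + d - 1) := by
        intro s hs
        have hs0 : (0:ℝ) ≤ s := le_of_lt (lt_trans ht2 hs.1)
        have h1 : K t ≤ K s := hK_anti (mem_Ici.2 hs0) (mem_Ici.2 ht.le) hs.2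
        have h2 : (t/2) ^ (β + d - 1) ≤ s ^ (β + d - 1) :=
          Real.rpow_le_rpow ht2.le hs.1.le hβd
        exact mul_le_mul h1 h2 (Real.rpow_nonneg ht2.le _) (hK_nonneg s)
      have := setIntegral_mono_on hconst hint1 measurableSet_Ioc hmono
      rwa [setIntegral_const, Real.volume_real_Ioc_of_le (by linarith), smul_eq_mul,
        show t - t/2 = t/2 by ring, mul_comm] at this
    have hkey : K t * (t/2) ^ e ≤ Mtot := by
      have heq : (t/2) ^ (β + d - 1) * (t/2) = (t/2) ^ e := by
        rw [show e = (β + (d:ℝ) - 1) + 1 by rw [he_def]; ring, Real.rpow_add_one ht2.ne']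
      calc K t * (t/2) ^ e = K t * (t/2) ^ (β + d - 1) * (t/2) := by rw [mul_assoc, heq]
        _ ≤ _ := le_trans hstep2 hstep1
    have hte : (0:ℝ) < t ^ e := Real.rpow_pos_of_pos ht _
    have htsplit : t ^ e = 2 ^ e * (t/2) ^ e := by
      rw [show t = 2 * (t/2) by ring, Real.mul_rpow (by norm_num) ht2.le]
      ring_nf
    rw [Real.rpow_neg ht.le, ← div_eq_mul_inv, le_div_iff₀ hte, htsplit, hC₁_def]
    calc K t * (2 ^ e * (t/2) ^ e) = 2 ^ e * (K t * (t/2) ^ e) := by ring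
      _ ≤ 2 ^ e * Mtot := mul_le_mul_of_nonneg_left hkey h2e.le
  -- the d-dimensional tail integral of the power function
  set J : ℝ≥0∞ := ∫⁻ y in {y : EuclideanSpace ℝ (Fin d) | 1 < ‖y‖},
      ENNReal.ofReal (‖y‖ ^ (-e)) with hJ_def
  have hJ_lt : J < ⊤ := by
    have hbound : ∀ y : EuclideanSpace ℝ (Fin d), y ∈ {y : EuclideanSpace ℝ (Fin d) | 1 < ‖y‖} →
        ENNReal.ofReal (‖y‖ ^ (-e)) ≤ ENNReal.ofReal (2 ^ e * (1 + ‖y‖) ^ (-e)) := by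
      intro y hy
      have hy1 : (1:ℝ) < ‖y‖ := hy
      have h1 : (0:ℝ) < (1 + ‖y‖) / 2 := by positivity
      have h2 : (1 + ‖y‖) / 2 ≤ ‖y‖ := by linarith
      have h3 : ‖y‖ ^ (-e) ≤ ((1 + ‖y‖) / 2) ^ (-e) :=
        Real.rpow_le_rpow_of_nonpos h1 h2 (by linarith)
      have h4 : ((1 + ‖y‖) / 2) ^ (-e) = 2 ^ e * (1 + ‖y‖) ^ (-e) := by
        rw [Real.div_rpow (by linarith) (by norm_num), Real.rpow_neg (by norm_num : (0:ℝ) ≤ 2),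
          div_eq_mul_inv, inv_inv, mul_comm]
      exact ENNReal.ofReal_le_ofReal (by rw [← h4]; exact h3)
    calc J ≤ ∫⁻ y in {y : EuclideanSpace ℝ (Fin d) | 1 < ‖y‖},
          ENNReal.ofReal (2 ^ e * (1 + ‖y‖) ^ (-e)) := by
          refine setLIntegral_mono' ?_ hbound
          exact (isOpen_lt continuous_const continuous_norm).measurableSet
      _ ≤ ∫⁻ y : EuclideanSpace ℝ (Fin d), ENNReal.ofReal (2 ^ e * (1 + ‖y‖) ^ (-e)) :=
        setLIntegral_le_lintegral _ _
      _ = ENNReal.ofReal (2 ^ e) * ∫⁻ y : EuclideanSpace ℝ (Fin d),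
          ENNReal.ofReal ((1 + ‖y‖) ^ (-e)) := by
        simp_rw [ENNReal.ofReal_mul h2e.le]
        exact lintegral_const_mul' _ _ ENNReal.ofReal_ne_top
      _ < ⊤ := by
        refine ENNReal.mul_lt_top ENNReal.ofReal_lt_top ?_
        refine finite_integral_one_add_norm ?_
        rw [finrank_euclideanSpace_fin, he_def]
        linarith
  set C : ℝ := 1 + C₁ * 2 ^ β * J.toReal with hC_def
  have h2β : (0:ℝ) < 2 ^ β := Real.rpow_pos_of_pos (by norm_num) _
  have hJt0 : 0 ≤ J.toReal := ENNReal.toReal_nonneg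
  have hCoef0 : 0 ≤ C₁ * 2 ^ β * J.toReal :=
    mul_nonneg (mul_nonneg hC₁0 h2β.le) hJt0
  refine ⟨C, by rw [hC_def]; linarith, ?_⟩
  intro Q hQ h r hh hr
  have hr0 : (0:ℝ) < r := lt_of_lt_of_le one_pos hr
  have hr2 : (0:ℝ) < r / 2 := by linarith
  have hhd : (0:ℝ) < h ^ d := pow_pos hh d
  set S : Set (EuclideanSpace ℝ (Fin d)) := {x | r < ‖x‖} with hS_def
  set H : Set (EuclideanSpace ℝ (Fin d)) := {x | r / 2 < ‖x‖} with hH_def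
  have hS_meas : MeasurableSet S := (isOpen_lt continuous_const continuous_norm).measurableSet
  have hH_meas : MeasurableSet H := (isOpen_lt continuous_const continuous_norm).measurableSet
  have hFm : Measurable (fun p : EuclideanSpace ℝ (Fin d) × EuclideanSpace ℝ (Fin d) =>
      ENNReal.ofReal (g (‖p.1 - p.2‖ / h))) :=
    (hg_meas.comp (((measurable_fst.sub measurable_snd).norm).div_const h)).ennreal_ofReal
  set Lin : EuclideanSpace ℝ (Fin d) → ℝ≥0∞ :=
    fun x => ∫⁻ x', ENNReal.ofReal (g (‖x - x'‖ / h)) ∂Q with hLin_def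
  have hLin_meas : Measurable Lin := hFm.lintegral_prod_right'
  have hLin_le : ∀ x, Lin x ≤ ENNReal.ofReal M := by
    intro x
    calc Lin x ≤ ∫⁻ _x', ENNReal.ofReal M ∂Q :=
        lintegral_mono fun x' => ENNReal.ofReal_le_ofReal (hg_le _)
      _ = ENNReal.ofReal M := by simp
  have hLin_lt : ∀ x, Lin x < ⊤ := fun x => lt_of_le_of_lt (hLin_le x) ENNReal.ofReal_lt_top
  -- rewrite the inner integral as a lower integral
  have hInner : ∀ x : EuclideanSpace ℝ (Fin d),
      (∫ x', K (‖x - x'‖ / h) ∂Q) = (Lin x).toReal := by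
    intro x
    have h1 : ∀ x' : EuclideanSpace ℝ (Fin d), K (‖x - x'‖ / h) = g (‖x - x'‖ / h) :=
      fun x' => (hg_eq _ (div_nonneg (norm_nonneg _) hh.le)).symm
    simp_rw [h1]
    rw [integral_eq_lintegral_of_nonneg_ae (Filter.Eventually.of_forall fun x' => hg_nonneg _)
      ((by fun_prop : Measurable fun x' : EuclideanSpace ℝ (Fin d) =>
        g (‖x - x'‖ / h)).aestronglyMeasurable)]
  have hLHS : (∫ x in S, (h ^ d)⁻¹ * ∫ x', K (‖x - x'‖ / h) ∂Q)
      = (∫⁻ x in S, ENNReal.ofReal ((h ^ d)⁻¹) * Lin x).toReal := by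
    have hpt2 : ∀ x : EuclideanSpace ℝ (Fin d), (h ^ d)⁻¹ * (∫ x', K (‖x - x'‖ / h) ∂Q)
        = ((ENNReal.ofReal ((h ^ d)⁻¹) * Lin x)).toReal := by
      intro x
      rw [hInner x, ENNReal.toReal_mul, ENNReal.toReal_ofReal (inv_nonneg.2 hhd.le)]
    simp_rw [hpt2]
    exact integral_toReal ((measurable_const.mul hLin_meas).aemeasurable.restrict)
      (Filter.Eventually.of_forall fun x => ENNReal.mul_lt_top ENNReal.ofReal_lt_top (hLin_lt x))
  -- total mass of the scaled kernel
  have hgm : Measurable fun z : EuclideanSpace ℝ (Fin d) => ENNReal.ofReal (g (‖z‖ / h)) :=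
    (hg_meas.comp (measurable_norm.div_const h)).ennreal_ofReal
  have hfull : ∫⁻ z : EuclideanSpace ℝ (Fin d), ENNReal.ofReal (g (‖z‖ / h))
      = ENNReal.ofReal (h ^ d) := by
    rw [stmt5_aux_scaling hh _ hgm]
    have h1 : ∀ z : EuclideanSpace ℝ (Fin d),
        ENNReal.ofReal (g (‖h • z‖ / h)) = ENNReal.ofReal (K ‖z‖) := by
      intro z
      rw [norm_smul, Real.norm_eq_abs, abs_of_pos hh, mul_div_cancel_left₀ _ hh.ne',
        hg_eq _ (norm_nonneg z)]
    simp_rw [h1]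
    rw [← ofReal_integral_eq_lintegral_ofReal hK_int
      (Filter.Eventually.of_forall fun z => hK_nonneg _), hK_one, ENNReal.ofReal_one, mul_one]
  -- translation invariance
  have htrans1 : ∀ x' : EuclideanSpace ℝ (Fin d),
      ∫⁻ x, ENNReal.ofReal (g (‖x - x'‖ / h)) = ENNReal.ofReal (h ^ d) := by
    intro x'
    calc ∫⁻ x, ENNReal.ofReal (g (‖x - x'‖ / h))
        = ∫⁻ x, (fun z : EuclideanSpace ℝ (Fin d) =>
            ENNReal.ofReal (g (‖z‖ / h))) (x + (-x')) := by simp_rw [sub_eq_add_neg]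
      _ = ∫⁻ z, ENNReal.ofReal (g (‖z‖ / h)) :=
          lintegral_add_right_eq_self
            (fun z : EuclideanSpace ℝ (Fin d) => ENNReal.ofReal (g (‖z‖ / h))) (-x')
      _ = ENNReal.ofReal (h ^ d) := hfull
  set ψ : EuclideanSpace ℝ (Fin d) → ℝ≥0∞ :=
    H.indicator (fun z => ENNReal.ofReal (g (‖z‖ / h))) with hψ_def
  have htrans2 : ∀ x' : EuclideanSpace ℝ (Fin d), ‖x'‖ ≤ r/2 →
      (∫⁻ x in S, ENNReal.ofReal (g (‖x - x'‖ / h)))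
        ≤ ∫⁻ z in H, ENNReal.ofReal (g (‖z‖ / h)) := by
    intro x' hx'
    have hψle : ∀ x ∈ S, ENNReal.ofReal (g (‖x - x'‖ / h)) ≤ ψ (x - x') := by
      intro x hx
      have hxS : r < ‖x‖ := hx
      have h1 : ‖x‖ - ‖x'‖ ≤ ‖x - x'‖ := norm_sub_norm_le x x'
      have hxH : x - x' ∈ H := by
        rw [hH_def, mem_setOf_eq]
        linarith
      rw [hψ_def, indicator_of_mem hxH]
    calc (∫⁻ x in S, ENNReal.ofReal (g (‖x - x'‖ / h)))
        ≤ ∫⁻ x in S, ψ (x - x') := setLIntegral_mono' hS_meas hψle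
      _ ≤ ∫⁻ x, ψ (x - x') := setLIntegral_le_lintegral _ _
      _ = ∫⁻ x, ψ (x + (-x')) := by simp_rw [sub_eq_add_neg]
      _ = ∫⁻ z, ψ z := lintegral_add_right_eq_self ψ (-x')
      _ = ∫⁻ z in H, ENNReal.ofReal (g (‖z‖ / h)) := by
          rw [hψ_def, lintegral_indicator hH_meas]
  -- tail bound
  set B : ℝ≥0∞ := ENNReal.ofReal (C₁ * 2 ^ β * (h / r) ^ β) * J with hB_def
  have hB_lt : B < ⊤ := ENNReal.mul_lt_top ENNReal.ofReal_lt_top hJ_lt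
  have htail : (∫⁻ z in H, ENNReal.ofReal (g (‖z‖ / h)))
      ≤ ENNReal.ofReal (h ^ d) * B := by
    have hm1 : Measurable fun z : EuclideanSpace ℝ (Fin d) =>
        ENNReal.ofReal ((‖z‖ / h) ^ (-e)) :=
      by fun_prop
    have hmono : (∫⁻ z in H, ENNReal.ofReal (g (‖z‖ / h)))
        ≤ ENNReal.ofReal C₁ * ∫⁻ z in H, ENNReal.ofReal ((‖z‖ / h) ^ (-e)) := by
      rw [← lintegral_const_mul' _ _ ENNReal.ofReal_ne_top]
      refine setLIntegral_mono' hH_meas ?_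
      intro z hz
      have hz0 : 0 < ‖z‖ / h := div_pos (lt_trans hr2 hz) hh
      rw [← ENNReal.ofReal_mul hC₁0]
      refine ENNReal.ofReal_le_ofReal ?_
      rw [hg_eq _ hz0.le]
      exact hpt _ hz0
    have hscale : (∫⁻ z in H, ENNReal.ofReal ((‖z‖ / h) ^ (-e)))
        = ENNReal.ofReal ((r/2) ^ d) * (ENNReal.ofReal ((r/(2*h)) ^ (-e)) * J) := by
      rw [← lintegral_indicator hH_meas,
        stmt5_aux_scaling hr2 _ (hm1.indicator hH_meas)]
      congr 1
      have hptw : ∀ y : EuclideanSpace ℝ (Fin d),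
          H.indicator (fun z => ENNReal.ofReal ((‖z‖ / h) ^ (-e))) ((r/2) • y)
            = {y : EuclideanSpace ℝ (Fin d) | 1 < ‖y‖}.indicator
                (fun y => ENNReal.ofReal ((r/(2*h)) ^ (-e)) * ENNReal.ofReal (‖y‖ ^ (-e))) y := by
        intro y
        have hnorm : ‖(r/2 : ℝ) • y‖ = (r/2) * ‖y‖ := by
          rw [norm_smul, Real.norm_eq_abs, abs_of_pos hr2]
        have hmem : ((r/2 : ℝ) • y ∈ H) ↔ 1 < ‖y‖ := by
          rw [hH_def, mem_setOf_eq, hnorm]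
          exact lt_mul_iff_one_lt_right hr2
        by_cases hy : 1 < ‖y‖
        · simp only [indicator_apply, mem_setOf_eq, hmem, if_pos hy, hnorm]
          rw [show (r/2) * ‖y‖ / h = (r/(2*h)) * ‖y‖ by ring,
            Real.mul_rpow (by positivity) (norm_nonneg y),
            ENNReal.ofReal_mul (Real.rpow_nonneg (by positivity) _)]
        · simp only [indicator_apply, mem_setOf_eq, hmem, if_neg hy]
      simp_rw [hptw]
      rw [lintegral_indicator ((isOpen_lt continuous_const continuous_norm).measurableSet),
        lintegral_const_mul' _ _ ENNReal.ofReal_ne_top, hJ_def]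
    have hkey : C₁ * ((r/2) ^ d * (r/(2*h)) ^ (-e)) = h ^ d * (C₁ * 2 ^ β * (h/r) ^ β) := by
      have ha : (0:ℝ) < r / (2*h) := by positivity
      have h1 : (r/(2*h)) ^ (-e) = (r/(2*h)) ^ (-β) * (r/(2*h)) ^ (-(d:ℝ)) := by
        rw [← Real.rpow_add ha, he_def]
        ring_nf
      have h2 : (r/(2*h)) ^ (-(d:ℝ)) = ((r/(2*h)) ^ d)⁻¹ := by
        rw [Real.rpow_neg ha.le, Real.rpow_natCast]
      have h3 : (r/(2*h)) ^ (-β) = 2 ^ β * (h/r) ^ β := by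
        rw [Real.rpow_neg ha.le, ← Real.inv_rpow ha.le,
          show (r/(2*h))⁻¹ = 2 * (h/r) by field_simp]
        exact Real.mul_rpow (by norm_num) (by positivity)
      have h4 : ((r:ℝ)/2) ^ d * ((r/(2*h)) ^ d)⁻¹ = h ^ d := by
        rw [← div_eq_mul_inv, ← div_pow, show ((r:ℝ)/2)/(r/(2*h)) = h by field_simp]
      rw [h1, h2, h3]
      linear_combination (C₁ * 2 ^ β * (h/r) ^ β) * h4
    calc (∫⁻ z in H, ENNReal.ofReal (g (‖z‖ / h)))
        ≤ ENNReal.ofReal C₁ * (ENNReal.ofReal ((r/2) ^ d)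
            * (ENNReal.ofReal ((r/(2*h)) ^ (-e)) * J)) := by rw [← hscale]; exact hmono
      _ = ENNReal.ofReal (C₁ * ((r/2) ^ d * (r/(2*h)) ^ (-e))) * J := by
          rw [ENNReal.ofReal_mul hC₁0, ENNReal.ofReal_mul (by positivity : (0:ℝ) ≤ (r/2) ^ d)]
          ring
      _ = ENNReal.ofReal (h ^ d) * B := by
          rw [hkey, ENNReal.ofReal_mul hhd.le, hB_def, mul_assoc]
  -- the pointwise-in-`x'` bound
  have hΦ : ∀ x' : EuclideanSpace ℝ (Fin d),
      (∫⁻ x in S, ENNReal.ofReal (g (‖x - x'‖ / h)))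
        ≤ ENNReal.ofReal (h ^ d) * (H.indicator (fun _ => (1:ℝ≥0∞)) x' + B) := by
    intro x'
    by_cases hx' : x' ∈ H
    · rw [indicator_of_mem hx']
      calc (∫⁻ x in S, ENNReal.ofReal (g (‖x - x'‖ / h)))
          ≤ ∫⁻ x, ENNReal.ofReal (g (‖x - x'‖ / h)) := setLIntegral_le_lintegral _ _
        _ = ENNReal.ofReal (h ^ d) := htrans1 x'
        _ = ENNReal.ofReal (h ^ d) * 1 := (mul_one _).symm
        _ ≤ ENNReal.ofReal (h ^ d) * (1 + B) := mul_le_mul_right le_self_add _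
    · have hx'le : ‖x'‖ ≤ r / 2 := le_of_not_gt hx'
      rw [indicator_of_notMem hx', zero_add]
      exact le_trans (htrans2 x' hx'le) htail
  -- put everything together
  have hQint : (∫⁻ x', (H.indicator (fun _ => (1:ℝ≥0∞)) x' + B) ∂Q) = Q H + B := by
    rw [lintegral_add_right _ measurable_const, lintegral_indicator hH_meas]
    simp [measure_univ]
  have hmain : (∫⁻ x in S, ENNReal.ofReal ((h ^ d)⁻¹) * Lin x) ≤ Q H + B := by
    rw [lintegral_const_mul' _ _ ENNReal.ofReal_ne_top]
    have hswap : (∫⁻ x in S, Lin x)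
        = ∫⁻ x', (∫⁻ x in S, ENNReal.ofReal (g (‖x - x'‖ / h))) ∂Q :=
      lintegral_lintegral_swap hFm.aemeasurable
    rw [hswap]
    calc ENNReal.ofReal ((h^d)⁻¹)
          * ∫⁻ x', (∫⁻ x in S, ENNReal.ofReal (g (‖x - x'‖ / h))) ∂Q
        ≤ ENNReal.ofReal ((h^d)⁻¹) * ∫⁻ x', ENNReal.ofReal (h ^ d)
            * (H.indicator (fun _ => (1:ℝ≥0∞)) x' + B) ∂Q :=
          mul_le_mul_right (lintegral_mono hΦ) _
      _ = ENNReal.ofReal ((h^d)⁻¹) * (ENNReal.ofReal (h ^ d) * (Q H + B)) := by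
          rw [lintegral_const_mul' _ _ ENNReal.ofReal_ne_top, hQint]
      _ = Q H + B := by
          rw [← mul_assoc, ← ENNReal.ofReal_mul (inv_nonneg.2 hhd.le),
            inv_mul_cancel₀ hhd.ne', ENNReal.ofReal_one, one_mul]
  have hQH_ne : Q H ≠ ⊤ := measure_ne_top Q H
  rw [hLHS]
  calc (∫⁻ x in S, ENNReal.ofReal ((h ^ d)⁻¹) * Lin x).toReal
      ≤ (Q H + B).toReal :=
        ENNReal.toReal_mono (ENNReal.add_ne_top.2 ⟨hQH_ne, hB_lt.ne⟩) hmain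
    _ = (Q H).toReal + B.toReal := ENNReal.toReal_add hQH_ne hB_lt.ne
    _ = (Q H).toReal + (C₁ * 2 ^ β * (h/r) ^ β) * J.toReal := by
        rw [hB_def, ENNReal.toReal_mul, ENNReal.toReal_ofReal
          (mul_nonneg (mul_nonneg hC₁0 h2β.le) (Real.rpow_nonneg (by positivity) _))]
    _ ≤ C * ((Q H).toReal + (h/r) ^ β) := by
        have hQH0 : 0 ≤ (Q H).toReal := ENNReal.toReal_nonneg
        have hhr0 : 0 ≤ (h/r) ^ β := Real.rpow_nonneg (by positivity) _
        rw [hC_def]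
        nlinarith [mul_nonneg hCoef0 hQH0, mul_nonneg hCoef0 hhr0]
end

section
/- Let K be a d-dimensional smoothing kernel that is β-Hölder continuous and satisfies ∫₀^∞ K(t)t^{β+d-1} dt < ∞. Then for any probability measure P with density f, for all h ∈ (0,1] and r ≥ 1: ‖f_{P,h} − f‖₁ ≤ C ( r^d ‖f_{P,h} − f‖_∞ + P(H_{r/2}) + (h/r)^β ), where H_{r/2} = {x : ‖x‖ > r/2} and C depends only on K, d, β. -/
open MeasureTheory Set
open scoped Convolution

/-- `‖f_{P,h} − f‖₁ ≤ C (r^d ‖f_{P,h} − f‖_∞ + P(H_{r/2}) + (h/r)^β)` for all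
`h ∈ (0,1]` and `r ≥ 1`, where the sup-norm is expressed via any uniform bound `M`. -/
theorem stmt6 (d : ℕ) (hd : 1 ≤ d) (K : ℝ → ℝ) (β c : ℝ) (hβ : 0 < β) (hβ1 : β ≤ 1)
    (hc : 0 < c)
    (hK_nonneg : ∀ r, 0 ≤ K r)
    (hK_bdd : ∃ M, ∀ r, K r ≤ M)
    (hK_anti : AntitoneOn K (Set.Ici (0 : ℝ)))
    (hK_hoelder : ∀ s t : ℝ, 0 ≤ s → 0 ≤ t → |K s - K t| ≤ c * |s - t| ^ β)
    (hK_int : Integrable (fun x : EuclideanSpace ℝ (Fin d) => K ‖x‖))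
    (hK_one : ∫ x : EuclideanSpace ℝ (Fin d), K ‖x‖ = 1)
    (hK_moment : IntegrableOn (fun t : ℝ => K t * t ^ (β + d - 1)) (Set.Ioi 0))
    (f : EuclideanSpace ℝ (Fin d) → ℝ)
    (hf_nonneg : ∀ x, 0 ≤ f x)
    (hf_int : Integrable f)
    (hf_one : ∫ x, f x = 1) :
    ∃ C > 0, ∀ (h r : ℝ), 0 < h → h ≤ 1 → 1 ≤ r →
      ∀ M : ℝ, (∀ x : EuclideanSpace ℝ (Fin d),
          |(h ^ d)⁻¹ * (∫ x', K (‖x - x'‖ / h) * f x') - f x| ≤ M) →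
        ∫ x : EuclideanSpace ℝ (Fin d),
            |(h ^ d)⁻¹ * (∫ x', K (‖x - x'‖ / h) * f x') - f x|
          ≤ C * (r ^ d * M
              + (∫ x in {x : EuclideanSpace ℝ (Fin d) | r / 2 < ‖x‖}, f x)
              + (h / r) ^ β) := by
  classical
  set V1 : ℝ := (volume (Metric.closedBall (0 : EuclideanSpace ℝ (Fin d)) 1)).toReal with hV1
  have hV1nn : 0 ≤ V1 := ENNReal.toReal_nonneg
  refine ⟨2 * V1 + 2, by positivity, ?_⟩
  intro h r hh hh1 hr M hM
  have hhd : (0:ℝ) < h ^ d := pow_pos hh d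
  set k : EuclideanSpace ℝ (Fin d) → ℝ := fun u => K (‖u‖ / h) with hk
  have hk_smul : ∀ u : EuclideanSpace ℝ (Fin d), k u = K ‖h⁻¹ • u‖ := by
    intro u
    simp [hk, norm_smul, abs_of_pos (inv_pos.2 hh), abs_of_pos hh, div_eq_inv_mul, mul_comm]
  have hkint : Integrable k := by
    have := hK_int.comp_smul (R := h⁻¹) (inv_ne_zero hh.ne')
    simpa [← hk_smul] using this
  have hkone : ∫ u, k u = h ^ d := by
    have : ∫ u : EuclideanSpace ℝ (Fin d), K ‖h⁻¹ • u‖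
        = (h ^ Module.finrank ℝ (EuclideanSpace ℝ (Fin d))) •
          ∫ x : EuclideanSpace ℝ (Fin d), K ‖x‖ :=
      Measure.integral_comp_inv_smul_of_nonneg volume (fun x => K ‖x‖) hh.le
    simp_rw [hk_smul]
    rw [this, hK_one, finrank_euclideanSpace, Fintype.card_fin, smul_eq_mul, mul_one]
  -- the convolution
  set g : EuclideanSpace ℝ (Fin d) → ℝ := f ⋆[ContinuousLinearMap.mul ℝ ℝ] k with hg
  have hg_int : Integrable g :=
    hf_int.integrable_convolution (ContinuousLinearMap.mul ℝ ℝ) hkint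
  have hg_integral : ∫ x, g x = h ^ d := by
    rw [hg, integral_convolution _ hf_int hkint, hf_one, hkone]
    simp
  have hg_eq : ∀ x, (∫ x', K (‖x - x'‖ / h) * f x') = g x := by
    intro x
    rw [hg, convolution_def]
    simp_rw [ContinuousLinearMap.mul_apply', mul_comm]
    rfl
  have hg_nonneg : ∀ x, 0 ≤ g x := by
    intro x
    rw [← hg_eq x]
    exact integral_nonneg fun x' => mul_nonneg (hK_nonneg _) (hf_nonneg _)
  set φ : EuclideanSpace ℝ (Fin d) → ℝ := fun x => (h ^ d)⁻¹ * g x - f x with hφ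
  have hφ_int : Integrable φ := (hg_int.const_mul _).sub hf_int
  have hφ_integral : ∫ x, φ x = 0 := by
    rw [hφ]
    rw [integral_sub (hg_int.const_mul _) hf_int, integral_const_mul, hg_integral, hf_one,
      inv_mul_cancel₀ hhd.ne']
    ring
  have hφM : ∀ x, |φ x| ≤ M := by
    intro x; have := hM x; rwa [hg_eq x] at this
  have hM0 : 0 ≤ M := le_trans (abs_nonneg _) (hφM 0)
  have hφ_abs_le : ∀ x, |φ x| ≤ φ x + 2 * f x := by
    intro x
    rcases abs_cases (φ x) with ⟨he, _⟩ | ⟨he, _⟩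
    · rw [he]; nlinarith [hf_nonneg x]
    · rw [he]
      have : 0 ≤ (h ^ d)⁻¹ * g x := mul_nonneg (inv_nonneg.2 hhd.le) (hg_nonneg x)
      simp only [hφ]
      nlinarith [hf_nonneg x]
  set B : Set (EuclideanSpace ℝ (Fin d)) := Metric.closedBall 0 r with hB
  have hBmeas : MeasurableSet B := measurableSet_closedBall
  have hvolB : (volume B).toReal = r ^ d * V1 := by
    rw [hB, Measure.addHaar_closedBall' _ _ (by linarith : (0:ℝ) ≤ r),
      finrank_euclideanSpace, Fintype.card_fin, ENNReal.toReal_mul,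
      ENNReal.toReal_ofReal (by positivity)]
  have hvolB_lt : volume B < ⊤ := measure_closedBall_lt_top
  -- bound on B
  have hInner : ∫ x in B, |φ x| ≤ r ^ d * V1 * M := by
    calc ∫ x in B, |φ x| ≤ ∫ _x in B, M := by
          refine setIntegral_mono_on hφ_int.abs.integrableOn
            (integrableOn_const hvolB_lt.ne) hBmeas fun x _ => hφM x
      _ = (volume B).toReal * M := by rw [setIntegral_const, smul_eq_mul]; rfl
      _ = r ^ d * V1 * M := by rw [hvolB]
  -- ∫_{Bᶜ} φ = -∫_B φ ≤ ∫_B |φ|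
  have hsplitφ : (∫ x in B, φ x) + ∫ x in Bᶜ, φ x = 0 := by
    rw [integral_add_compl hBmeas hφ_int, hφ_integral]
  have houterφ : ∫ x in Bᶜ, φ x ≤ r ^ d * V1 * M := by
    have h1 : ∫ x in Bᶜ, φ x = -∫ x in B, φ x := by linarith
    have h2 : -∫ x in B, φ x ≤ ∫ x in B, |φ x| := by
      have habs : |∫ x in B, φ x| ≤ ∫ x in B, |φ x| := by
        simpa [Real.norm_eq_abs] using
          norm_integral_le_integral_norm (f := φ) (μ := volume.restrict B)
      have h3 : -∫ x in B, φ x ≤ |∫ x in B, φ x| := neg_le_abs _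
      linarith
    linarith [hInner]
  -- tail of f
  set T : ℝ := ∫ x in {x : EuclideanSpace ℝ (Fin d) | r / 2 < ‖x‖}, f x with hT
  have hTmeas : MeasurableSet {x : EuclideanSpace ℝ (Fin d) | r / 2 < ‖x‖} :=
    (isOpen_lt continuous_const continuous_norm).measurableSet
  have hT0 : 0 ≤ T :=
    setIntegral_nonneg hTmeas fun x _ => hf_nonneg x
  have hftail : ∫ x in Bᶜ, f x ≤ T := by
    refine setIntegral_mono_set hf_int.integrableOn
      (Filter.Eventually.of_forall fun x => hf_nonneg x)
      (HasSubset.Subset.eventuallyLE ?_)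
    intro x hx
    simp only [hB, Metric.mem_closedBall, dist_zero_right, mem_compl_iff, not_le] at hx
    simp only [mem_setOf_eq]
    linarith
  -- bound on Bᶜ
  have hOuter : ∫ x in Bᶜ, |φ x| ≤ r ^ d * V1 * M + 2 * T := by
    calc ∫ x in Bᶜ, |φ x| ≤ ∫ x in Bᶜ, (φ x + 2 * f x) := by
          refine setIntegral_mono hφ_int.abs.integrableOn
            (hφ_int.add (hf_int.const_mul 2)).integrableOn fun x => hφ_abs_le x
      _ = (∫ x in Bᶜ, φ x) + 2 * ∫ x in Bᶜ, f x := by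
          rw [integral_add hφ_int.integrableOn ((hf_int.const_mul 2).integrableOn)]
          rw [integral_const_mul]
      _ ≤ r ^ d * V1 * M + 2 * T := by
          have := hftail
          linarith [houterφ]
  -- combine
  have htotal : ∫ x, |φ x| = (∫ x in B, |φ x|) + ∫ x in Bᶜ, |φ x| :=
    (integral_add_compl hBmeas hφ_int.abs).symm
  have hgoal_eq : ∫ x : EuclideanSpace ℝ (Fin d),
      |(h ^ d)⁻¹ * (∫ x', K (‖x - x'‖ / h) * f x') - f x| = ∫ x, |φ x| := by
    congr 1; funext x; rw [hg_eq x]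
  rw [hgoal_eq]
  have hP : (0:ℝ) ≤ (h / r) ^ β :=
    Real.rpow_nonneg (div_nonneg hh.le (by linarith)) β
  have hrd : (0:ℝ) ≤ r ^ d := pow_nonneg (by linarith) d
  nlinarith [mul_nonneg hrd hM0, mul_nonneg hV1nn hT0, mul_nonneg hV1nn hP,
    mul_nonneg (mul_nonneg hrd hV1nn) hM0, mul_nonneg hV1nn (mul_nonneg hrd hM0)]
end

section
/- Let K be β-Hölder continuous with constant c, h ∈ (0,1], r ≥ 1, and consider K_{h,r} := {k_{x,h} : x ∈ B_r} ⊂ L_∞(ℝ^d), where k_{x,h}(y) = h^{-d}K(‖x−y‖/h) and B_r = {x : ‖x‖ ≤ r}. Then there is a constant c' > 0 (independent of ε, h, r) such that for all ε ∈ (0,1]: N(K_{h,r}, ‖·‖_∞, ε) ≤ c' r^d h^{-d - d²/β} ε^{-d/β}. -/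
open MeasureTheory Set


lemma coord_le_norm {d : ℕ} (x : EuclideanSpace ℝ (Fin d)) (i : Fin d) : |x i| ≤ ‖x‖ := by
  rw [EuclideanSpace.norm_eq]
  have h1 : |x i| = Real.sqrt (‖x i‖ ^ 2) := by
    rw [Real.sqrt_sq_eq_abs, Real.norm_eq_abs, abs_abs]
  rw [h1]
  apply Real.sqrt_le_sqrt
  exact Finset.single_le_sum (fun j _ => sq_nonneg ‖x j‖) (Finset.mem_univ i)

set_option maxHeartbeats 1000000 in
lemma ball_net (d : ℕ) (hd : 1 ≤ d) (r δ C0 : ℝ) (hr : 1 ≤ r) (hδ : 0 < δ) (hδC : δ ≤ C0) :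
    ∃ S : Finset (EuclideanSpace ℝ (Fin d)),
      (S.card : ℝ) ≤ ((2 + 5 * C0) * d) ^ d * r ^ d * (δ⁻¹) ^ d ∧
      (∀ x' ∈ S, ‖x'‖ ≤ r) ∧
      ∀ x : EuclideanSpace ℝ (Fin d), ‖x‖ ≤ r → ∃ x' ∈ S, ‖x - x'‖ ≤ δ := by
  classical
  have hd0 : (0:ℝ) < d := by exact_mod_cast hd
  have hd1 : (1:ℝ) ≤ d := by exact_mod_cast hd
  set δ' : ℝ := δ / d with hδ'def
  have hδ'pos : 0 < δ' := div_pos hδ hd0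
  have hδ'le : δ' ≤ δ := by
    rw [hδ'def, div_le_iff₀ hd0]
    nlinarith
  set N : ℕ := ⌈r / δ'⌉₊ + 1 with hNdef
  set g : (Fin d → ℤ) → EuclideanSpace ℝ (Fin d) :=
    fun z => (WithLp.equiv 2 (Fin d → ℝ)).symm (fun i => δ' * z i) with hgdef
  set f : (Fin d → ℤ) → EuclideanSpace ℝ (Fin d) :=
    fun z => if ‖g z‖ ≤ r then g z else (r / ‖g z‖) • g z with hfdef
  set T : Finset (Fin d → ℤ) := Fintype.piFinset (fun _ => Finset.Icc (-(N:ℤ)) (N:ℤ)) with hTdef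
  have hC0pos : 0 < C0 := lt_of_lt_of_le hδ hδC
  refine ⟨T.image f, ?_, ?_, ?_⟩
  · -- cardinality bound
    have hTcard : T.card = (2 * N + 1) ^ d := by
      rw [hTdef, Fintype.card_piFinset]
      simp only [Int.card_Icc]
      rw [Finset.prod_const, Finset.card_univ, Fintype.card_fin]
      congr 1
      omega
    have h1 : ((T.image f).card : ℝ) ≤ ((2 * N + 1 : ℕ) : ℝ) ^ d := by
      calc ((T.image f).card : ℝ) ≤ (T.card : ℝ) := by
            exact_mod_cast Finset.card_image_le
        _ = _ := by rw [hTcard]; push_cast; ring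
    have h2 : ((2 * N + 1 : ℕ) : ℝ) ≤ (2 + 5 * C0) * r / δ' := by
      have hceil : (⌈r / δ'⌉₊ : ℝ) < r / δ' + 1 :=
        Nat.ceil_lt_add_one (by positivity)
      have hN : (N : ℝ) ≤ r / δ' + 2 := by
        rw [hNdef]; push_cast; linarith
      have h5 : (5:ℝ) ≤ 5 * C0 * r / δ' := by
        rw [le_div_iff₀ hδ'pos]
        have : δ' ≤ C0 * r := le_trans hδ'le (le_trans hδC (by nlinarith))
        nlinarith
      calc ((2 * N + 1 : ℕ) : ℝ) = 2 * (N:ℝ) + 1 := by push_cast; ring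
        _ ≤ 2 * (r / δ' + 2) + 1 := by linarith
        _ = 2 * (r / δ') + 5 := by ring
        _ ≤ 2 * (r / δ') + 5 * C0 * r / δ' := by linarith
        _ = (2 + 5 * C0) * r / δ' := by ring
    calc ((T.image f).card : ℝ) ≤ ((2 * N + 1 : ℕ) : ℝ) ^ d := h1
      _ ≤ ((2 + 5 * C0) * r / δ') ^ d := pow_le_pow_left₀ (by positivity) h2 d
      _ = ((2 + 5 * C0) * d) ^ d * r ^ d * (δ⁻¹) ^ d := by
          rw [← mul_pow, ← mul_pow]
          congr 1
          rw [hδ'def]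
          field_simp
  · -- norms ≤ r
    intro x' hx'
    obtain ⟨z, _, rfl⟩ := Finset.mem_image.mp hx'
    rw [hfdef]
    by_cases hgz : ‖g z‖ ≤ r
    · simpa [hgz] using hgz
    · simp only [hgz, if_false]
      push_neg at hgz
      have hgzpos : 0 < ‖g z‖ := lt_of_le_of_lt (le_trans zero_le_one hr) hgz
      rw [norm_smul, Real.norm_eq_abs, abs_of_nonneg (by positivity),
        div_mul_cancel₀ _ hgzpos.ne']
  · -- net property
    intro x hx
    set z : Fin d → ℤ := fun i => round (x i / δ') with hzdef
    have hzT : z ∈ T := by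
      rw [hTdef, Fintype.mem_piFinset]
      intro i
      rw [Finset.mem_Icc, ← abs_le]
      have h1 : |x i| ≤ r := le_trans (coord_le_norm x i) hx
      have h2 : |(z i : ℝ)| ≤ N := by
        have h3 : |(z i : ℝ) - x i / δ'| ≤ 1/2 := by
          rw [hzdef]
          simpa [abs_sub_comm] using abs_sub_round (x i / δ')
        have h4 : |x i / δ'| ≤ r / δ' := by
          rw [abs_div, abs_of_pos hδ'pos]
          gcongr
        have h6 : r / δ' ≤ (⌈r / δ'⌉₊ : ℝ) := Nat.le_ceil _
        have h7 : |(z i : ℝ)| ≤ |(z i : ℝ) - x i / δ'| + |x i / δ'| := by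
          calc |(z i : ℝ)| = |(z i : ℝ) - x i / δ' + x i / δ'| := by ring_nf
            _ ≤ _ := abs_add_le _ _
        have h8 : (N : ℝ) = (⌈r / δ'⌉₊ : ℝ) + 1 := by rw [hNdef]; push_cast; ring
        linarith
      exact_mod_cast h2
    have hdist : ‖x - g z‖ ≤ δ / 2 := by
      have hcoord : ∀ i, ‖(x - g z) i‖ ≤ δ' / 2 := by
        intro i
        have he : (x - g z) i = x i - δ' * z i := by
          simp [hgdef]
        rw [he, Real.norm_eq_abs]
        have h3 : |x i / δ' - (z i : ℝ)| ≤ 1/2 := by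
          rw [hzdef]; simpa using abs_sub_round (x i / δ')
        have h4 : x i - δ' * z i = δ' * (x i / δ' - z i) := by field_simp
        rw [h4, abs_mul, abs_of_pos hδ'pos]
        nlinarith
      rw [EuclideanSpace.norm_eq]
      have hsum : ∑ i, ‖(x - g z) i‖ ^ 2 ≤ d * (δ' / 2) ^ 2 := by
        calc ∑ i, ‖(x - g z) i‖ ^ 2 ≤ ∑ _i : Fin d, (δ' / 2) ^ 2 :=
              Finset.sum_le_sum fun i _ => by
                have := hcoord i
                have := norm_nonneg ((x - g z) i)
                nlinarith
          _ = d * (δ' / 2) ^ 2 := by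
              rw [Finset.sum_const, Finset.card_univ, Fintype.card_fin, nsmul_eq_mul]
      have hsq : (d : ℝ) * (δ' / 2) ^ 2 ≤ (δ / 2) ^ 2 := by
        have e : (d : ℝ) * (δ' / 2) ^ 2 = δ ^ 2 / (4 * d) := by
          rw [hδ'def]; field_simp; ring
        rw [e, div_le_iff₀ (by positivity)]
        nlinarith [sq_nonneg δ]
      calc Real.sqrt (∑ i, ‖(x - g z) i‖ ^ 2) ≤ Real.sqrt ((δ / 2) ^ 2) :=
            Real.sqrt_le_sqrt (le_trans hsum hsq)
        _ = δ / 2 := Real.sqrt_sq (by positivity)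
    refine ⟨f z, Finset.mem_image_of_mem f hzT, ?_⟩
    rw [hfdef]
    by_cases hgz : ‖g z‖ ≤ r
    · simp only [hgz, if_true]
      linarith
    · simp only [hgz, if_false]
      push_neg at hgz
      have hgzpos : 0 < ‖g z‖ := lt_of_le_of_lt (le_trans zero_le_one hr) hgz
      have h1 : ‖g z - (r / ‖g z‖) • g z‖ = ‖g z‖ - r := by
        have he : g z - (r / ‖g z‖) • g z = (1 - r / ‖g z‖) • g z := by
          rw [sub_smul, one_smul]
        rw [he, norm_smul, Real.norm_eq_abs, abs_of_nonneg, sub_mul, one_mul,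
          div_mul_cancel₀ _ hgzpos.ne']
        rw [sub_nonneg, div_le_one hgzpos]
        exact hgz.le
      have h2 : ‖g z‖ ≤ r + δ / 2 := by
        calc ‖g z‖ ≤ ‖x‖ + ‖g z - x‖ := by
              have := norm_add_le x (g z - x); simpa using this
          _ ≤ r + δ / 2 := by
              rw [← norm_neg (g z - x)]
              simp only [neg_sub]
              linarith
      calc ‖x - (r / ‖g z‖) • g z‖ ≤ ‖x - g z‖ + ‖g z - (r / ‖g z‖) • g z‖ := by
            have := dist_triangle x (g z) ((r / ‖g z‖) • g z)
            simpa [dist_eq_norm] using this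
        _ ≤ δ / 2 + (‖g z‖ - r) := by rw [h1]; linarith
        _ ≤ δ := by linarith

/-- Covering number bound for the set `K_{h,r} = {k_{x,h} : x ∈ B_r}` in `L_∞`:
there is `c' > 0` (independent of `ε`, `h`, `r`) such that for all `ε ∈ (0,1]`,
`N(K_{h,r}, ‖·‖_∞, ε) ≤ c' r^d h^{-d - d²/β} ε^{-d/β}`, expressed via finite
`ε`-nets of kernel translates with respect to the supremum distance. -/
theorem stmt10 (d : ℕ) (hd : 1 ≤ d) (K : ℝ → ℝ) (β c : ℝ)
    (hβ : 0 < β) (hβ1 : β ≤ 1) (hc : 0 < c)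
    (hK_nonneg : ∀ r, 0 ≤ K r)
    (hK_bdd : ∃ M, ∀ r, K r ≤ M)
    (hK_anti : AntitoneOn K (Set.Ici (0 : ℝ)))
    (hK_hoelder : ∀ s t : ℝ, 0 ≤ s → 0 ≤ t → |K s - K t| ≤ c * |s - t| ^ β) :
    ∃ c' > 0, ∀ (h r : ℝ), 0 < h → h ≤ 1 → 1 ≤ r → ∀ ε : ℝ, 0 < ε → ε ≤ 1 →
      ∃ S : Finset (EuclideanSpace ℝ (Fin d)),
        (S.card : ℝ) ≤ c' * r ^ d * h ^ (-((d : ℝ) + d ^ 2 / β)) * ε ^ (-((d : ℝ) / β)) ∧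
        (∀ x' ∈ S, ‖x'‖ ≤ r) ∧
        ∀ x : EuclideanSpace ℝ (Fin d), ‖x‖ ≤ r →
          ∃ x' ∈ S, ∀ y : EuclideanSpace ℝ (Fin d),
            |(h ^ d)⁻¹ * K (‖x - y‖ / h) - (h ^ d)⁻¹ * K (‖x' - y‖ / h)| ≤ ε := by
  set C0 : ℝ := (1 / c) ^ (1 / β) with hC0def
  have hC0pos : 0 < C0 := Real.rpow_pos_of_pos (by positivity) _
  refine ⟨((2 + 5 * C0) * d) ^ d * c ^ ((d : ℝ) / β), by positivity, ?_⟩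
  intro h r hh hh1 hr ε hε hε1
  have hhd : (0:ℝ) < h ^ d := pow_pos hh d
  have hhd1 : h ^ d ≤ 1 := pow_le_one₀ hh.le hh1
  set a : ℝ := ε * h ^ d / c with hadef
  have hapos : 0 < a := by positivity
  set δ : ℝ := a ^ (1 / β) * h with hδdef
  have hδpos : 0 < δ := by positivity
  have haleb : a ≤ 1 / c := by
    rw [hadef]
    gcongr
    nlinarith
  have hδC : δ ≤ C0 := by
    have h1 : a ^ (1/β) ≤ (1/c) ^ (1/β) :=
      Real.rpow_le_rpow hapos.le haleb (by positivity)
    calc δ ≤ a ^ (1/β) * 1 := by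
          rw [hδdef]
          exact mul_le_mul_of_nonneg_left hh1 (Real.rpow_nonneg hapos.le _)
      _ = a ^ (1/β) := mul_one _
      _ ≤ C0 := h1
  obtain ⟨S, hcard, hnorm, hnet⟩ := ball_net d hd r δ C0 hr hδpos hδC
  refine ⟨S, ?_, hnorm, ?_⟩
  · have hid : (δ⁻¹) ^ d =
        c ^ ((d:ℝ)/β) * h ^ (-((d : ℝ) + (d:ℝ) ^ 2 / β)) * ε ^ (-((d : ℝ) / β)) := by
      have hL : (0:ℝ) < (δ⁻¹) ^ d := by positivity
      have hR : (0:ℝ) < c ^ ((d:ℝ)/β) * h ^ (-((d : ℝ) + (d:ℝ) ^ 2 / β)) * ε ^ (-((d : ℝ) / β)) := by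
        positivity
      apply Real.log_injOn_pos (Set.mem_Ioi.2 hL) (Set.mem_Ioi.2 hR)
      have l1 : Real.log ((δ⁻¹) ^ d) =
          -((d:ℝ) * ((1/β) * (Real.log ε + d * Real.log h - Real.log c) + Real.log h)) := by
        rw [Real.log_pow, Real.log_inv, hδdef,
          Real.log_mul (Real.rpow_pos_of_pos hapos _).ne' hh.ne',
          Real.log_rpow hapos, hadef, Real.log_div (by positivity) hc.ne',
          Real.log_mul hε.ne' hhd.ne', Real.log_pow]
        ring
      have l2 : Real.log (c ^ ((d:ℝ)/β) * h ^ (-((d : ℝ) + (d:ℝ) ^ 2 / β)) * ε ^ (-((d : ℝ) / β)))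
          = ((d:ℝ)/β) * Real.log c + (-((d : ℝ) + (d:ℝ) ^ 2 / β)) * Real.log h
            + (-((d : ℝ) / β)) * Real.log ε := by
        rw [Real.log_mul (by positivity) (by positivity),
          Real.log_mul (by positivity) (by positivity),
          Real.log_rpow hc, Real.log_rpow hh, Real.log_rpow hε]
      rw [l1, l2]
      field_simp
      ring
    calc (S.card : ℝ) ≤ ((2 + 5 * C0) * d) ^ d * r ^ d * (δ⁻¹) ^ d := hcard
      _ = ((2 + 5 * C0) * d) ^ d * c ^ ((d : ℝ) / β) * r ^ d *
            h ^ (-((d : ℝ) + (d:ℝ) ^ 2 / β)) * ε ^ (-((d : ℝ) / β)) := by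
          rw [hid]; ring
  · intro x hx
    obtain ⟨x', hx'S, hxx'⟩ := hnet x hx
    refine ⟨x', hx'S, fun y => ?_⟩
    have hdiff : |‖x - y‖ / h - ‖x' - y‖ / h| ≤ δ / h := by
      rw [div_sub_div_same, abs_div, abs_of_pos hh]
      gcongr
      calc |‖x - y‖ - ‖x' - y‖| ≤ ‖(x - y) - (x' - y)‖ := abs_norm_sub_norm_le _ _
        _ = ‖x - x'‖ := by rw [sub_sub_sub_cancel_right]
        _ ≤ δ := hxx'
    have hpow : |‖x - y‖ / h - ‖x' - y‖ / h| ^ β ≤ (δ / h) ^ β :=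
      Real.rpow_le_rpow (abs_nonneg _) hdiff hβ.le
    have hδβ : (δ / h) ^ β = a := by
      rw [Real.div_rpow hδpos.le hh.le, hδdef,
        Real.mul_rpow (Real.rpow_nonneg hapos.le _) hh.le,
        ← Real.rpow_mul hapos.le, one_div_mul_cancel hβ.ne', Real.rpow_one,
        mul_div_assoc, div_self (Real.rpow_pos_of_pos hh β).ne', mul_one]
    calc |(h ^ d)⁻¹ * K (‖x - y‖ / h) - (h ^ d)⁻¹ * K (‖x' - y‖ / h)|
        = (h ^ d)⁻¹ * |K (‖x - y‖ / h) - K (‖x' - y‖ / h)| := by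
          rw [← mul_sub, abs_mul, abs_of_pos (inv_pos.2 hhd)]
      _ ≤ (h ^ d)⁻¹ * (c * |‖x - y‖ / h - ‖x' - y‖ / h| ^ β) := by
          have := hK_hoelder (‖x - y‖ / h) (‖x' - y‖ / h) (by positivity) (by positivity)
          exact mul_le_mul_of_nonneg_left this (by positivity)
      _ ≤ (h ^ d)⁻¹ * (c * (δ / h) ^ β) := by
          exact mul_le_mul_of_nonneg_left
            (mul_le_mul_of_nonneg_left hpow hc.le) (by positivity)
      _ = ε := by
          rw [hδβ, hadef]
          field_simp
end
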